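/- Let n ≥ 2, α ∈ (-n, 0), and φ a Young function satisfying Λ̲_φ(α) < ∞ and Λ̄_φ(α) < ∞, and let Ω ⊆ ℝⁿ be an unbounded domain. Then every u ∈ C_c^1(Ω) has finite Orlicz-Besov seminorm ‖u‖_{Ḃ^{α,φ}(Ω)} < ∞. -/

import Mathlib

open MeasureTheory Set Filter
open scoped ENNReal NNReal Topology

noncomputable def Lunder (n : ℕ) (α : ℝ) (φ : ℝ → ℝ) : ℝ≥0∞ :=
  ⨆ x ∈ Set.Ioi (0:ℝ), ∫⁻ t in Set.Ioo (0:ℝ) 1,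
    ENNReal.ofReal (φ (t ^ (1 - α) * x) / (φ x * t ^ (n + 1)))

noncomputable def Lover (n : ℕ) (α : ℝ) (φ : ℝ → ℝ) : ℝ≥0∞ :=
  ⨆ x ∈ Set.Ioi (0:ℝ), ∫⁻ t in Set.Ioi (1:ℝ),
    ENNReal.ofReal (φ (t ^ (-α) * x) / (φ x * t ^ (n + 1)))

noncomputable def besovSet (n : ℕ) (α : ℝ) (φ : ℝ → ℝ)
    (Ω : Set (EuclideanSpace ℝ (Fin n))) (u : EuclideanSpace ℝ (Fin n) → ℝ) : Set ℝ :=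
  {l : ℝ | 0 < l ∧
    (∫⁻ x in Ω, ∫⁻ y in Ω,
      ENNReal.ofReal (φ (|u x - u y| / (l * ‖x - y‖ ^ α)) / ‖x - y‖ ^ (2 * n))) ≤ 1}

section Aux

open Measure Metric

/-- Polar-type formula for the Lebesgue integral of a radial function. -/
lemma lintegral_norm_polar {E : Type*} [NormedAddCommGroup E] [NormedSpace ℝ E]
    [MeasurableSpace E] [BorelSpace E] [FiniteDimensional ℝ E] [Nontrivial E]
    (μ : Measure E) [μ.IsAddHaarMeasure] (f : ℝ → ℝ≥0∞) (hf : Measurable f) :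
    ∫⁻ x, f ‖x‖ ∂μ
      = μ.toSphere Set.univ *
        ∫⁻ y in Set.Ioi (0:ℝ), ENNReal.ofReal (y ^ (Module.finrank ℝ E - 1)) * f y := by
  have h1 : ∫⁻ x, f ‖x‖ ∂μ = ∫⁻ x in ({0}ᶜ : Set E), f ‖x‖ ∂μ := by
    rw [MeasureTheory.restrict_compl_singleton (0:E)]
  have h2 : ∫⁻ x in ({0}ᶜ : Set E), f ‖x‖ ∂μ
      = ∫⁻ x : ({0}ᶜ : Set E), f ‖(x : E)‖ ∂(Measure.comap Subtype.val μ) :=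
    (lintegral_subtype_comap (measurableSet_singleton (0:E)).compl (fun x => f ‖x‖)).symm
  have hfm : Measurable fun p : ↥(sphere (0:E) 1) × ↥(Set.Ioi (0:ℝ)) => f p.2.1 :=
    hf.comp (measurable_subtype_coe.comp measurable_snd)
  have h3 : ∫⁻ x : ({0}ᶜ : Set E), f ‖(x : E)‖ ∂(Measure.comap Subtype.val μ)
      = ∫⁻ p : ↥(sphere (0:E) 1) × ↥(Set.Ioi (0:ℝ)), f p.2.1
          ∂(μ.toSphere.prod (Measure.volumeIoiPow (Module.finrank ℝ E - 1))) := by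
    rw [← (μ.measurePreserving_homeomorphUnitSphereProd).lintegral_comp hfm]
    congr 1
    funext x
    show f ‖(x : E)‖ = f (‖(x : E)‖ / 1)
    rw [div_one]
  have h4 : ∫⁻ p : ↥(sphere (0:E) 1) × ↥(Set.Ioi (0:ℝ)), f p.2.1
          ∂(μ.toSphere.prod (Measure.volumeIoiPow (Module.finrank ℝ E - 1)))
      = μ.toSphere Set.univ *
        ∫⁻ r : ↥(Set.Ioi (0:ℝ)), f r.1 ∂(Measure.volumeIoiPow (Module.finrank ℝ E - 1)) := by
    rw [MeasureTheory.lintegral_prod _ hfm.aemeasurable]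
    simp [lintegral_const, mul_comm]
  have h5 : ∫⁻ r : ↥(Set.Ioi (0:ℝ)), f r.1 ∂(Measure.volumeIoiPow (Module.finrank ℝ E - 1))
      = ∫⁻ y in Set.Ioi (0:ℝ), ENNReal.ofReal (y ^ (Module.finrank ℝ E - 1)) * f y := by
    rw [Measure.volumeIoiPow]
    erw [lintegral_withDensity_eq_lintegral_mul _
        ((measurable_subtype_coe.pow_const _).ennreal_ofReal)
        (hf.comp measurable_subtype_coe : Measurable fun r : ↥(Set.Ioi (0:ℝ)) => f r.1)]
    exact lintegral_subtype_comap measurableSet_Ioi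
      (fun y => ENNReal.ofReal (y ^ (Module.finrank ℝ E - 1)) * f y)
  rw [h1, h2, h3, h4, h5]

variable {φ : ℝ → ℝ}

lemma phi_nonneg (hzero : φ 0 = 0) (hpos : ∀ t > 0, 0 < φ t) :
    ∀ t, 0 ≤ t → 0 ≤ φ t := by
  intro t ht
  rcases eq_or_lt_of_le ht with h | h
  · simp [← h, hzero]
  · exact (hpos t h).le

lemma phi_mono (hconv : ConvexOn ℝ (Set.Ici 0) φ) (hzero : φ 0 = 0)
    (hpos : ∀ t > 0, 0 < φ t) :
    ∀ s t : ℝ, 0 ≤ s → s ≤ t → φ s ≤ φ t := by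
  intro s t hs hst
  have ht : 0 ≤ t := hs.trans hst
  rcases eq_or_lt_of_le hst with rfl | hlt
  · exact le_rfl
  · have htpos : 0 < t := lt_of_le_of_lt hs hlt
    have hstle : s / t ≤ 1 := (div_le_one htpos).2 hst
    have hstnn : 0 ≤ s / t := div_nonneg hs htpos.le
    have := hconv.2 (mem_Ici.2 htpos.le) (mem_Ici.2 le_rfl)
      hstnn (by linarith : (0:ℝ) ≤ 1 - s / t) (by ring)
    simp only [smul_eq_mul, mul_zero, add_zero, hzero] at this
    have harg : s / t * t = s := div_mul_cancel₀ s htpos.ne'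
    rw [harg] at this
    calc φ s ≤ s / t * φ t + (1 - s / t) * φ 0 := by simpa [hzero] using this
      _ = s / t * φ t := by simp [hzero]
      _ ≤ 1 * φ t := by
          have := phi_nonneg hzero hpos t ht
          nlinarith
      _ = φ t := one_mul _

lemma phi_scale (hconv : ConvexOn ℝ (Set.Ici 0) φ) (hzero : φ 0 = 0)
    {s l : ℝ} (hs : 0 ≤ s) (hl : 1 ≤ l) :
    φ (s / l) ≤ (1 / l) * φ s := by
  have hl0 : 0 < l := lt_of_lt_of_le one_pos hl
  have h1 : (0:ℝ) ≤ 1 / l := by positivity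
  have h2 : (1:ℝ)/l ≤ 1 := by
    rw [div_le_one hl0]; exact hl
  have := hconv.2 (mem_Ici.2 hs) (mem_Ici.2 le_rfl) h1 (by linarith : (0:ℝ) ≤ 1 - 1/l)
    (by ring)
  simp only [smul_eq_mul, mul_zero, add_zero, hzero] at this
  calc φ (s / l) = φ (1 / l * s) := by rw [one_div, inv_mul_eq_div]
    _ ≤ 1 / l * φ s + (1 - 1/l) * φ 0 := by simpa [hzero] using this
    _ = 1 / l * φ s := by simp [hzero]

end Aux

theorem stmt10 (n : ℕ) (hn : 2 ≤ n) (α : ℝ) (hα1 : -(n : ℝ) < α) (hα2 : α < 0)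
    (φ : ℝ → ℝ)
    (hconv : ConvexOn ℝ (Set.Ici 0) φ) (hcont : ContinuousOn φ (Set.Ici 0))
    (hzero : φ 0 = 0) (hpos : ∀ t > 0, 0 < φ t)
    (htop : Filter.Tendsto φ Filter.atTop Filter.atTop)
    (hL1 : Lunder n α φ < ⊤) (hL2 : Lover n α φ < ⊤)
    (Ω : Set (EuclideanSpace ℝ (Fin n))) (hopen : IsOpen Ω) (hconn : IsConnected Ω)
    (hunbd : ¬ Bornology.IsBounded Ω)
    (u : EuclideanSpace ℝ (Fin n) → ℝ) (hu : ContDiff ℝ 1 u)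
    (hsupp : HasCompactSupport u) (hsub : tsupport u ⊆ Ω) :
    (besovSet n α φ Ω u).Nonempty := by
  classical
  haveI ntE : Nontrivial (EuclideanSpace ℝ (Fin n)) :=
    Module.nontrivial_of_finrank_pos (R := ℝ)
      (by rw [finrank_euclideanSpace_fin]; omega)
  set ψ : ℝ → ℝ := fun t => φ (max t 0) with hψdef
  have hψc : Continuous ψ := hcont.comp_continuous
    (continuous_id.max continuous_const) (fun t => mem_Ici.2 (le_max_right _ _))
  have hφψ : ∀ t : ℝ, 0 ≤ t → φ t = ψ t := fun t ht => by
    simp [hψdef, max_eq_left ht]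
  have hψmono : Monotone ψ := fun s t hst =>
    phi_mono hconv hzero hpos _ _ (le_max_right _ _) (max_le_max hst le_rfl)
  have hψ0 : ψ 0 = 0 := by simp [hψdef, hzero]
  obtain ⟨C₀, hLip⟩ := hu.lipschitzWith_of_hasCompactSupport hsupp one_ne_zero
  set C : ℝ := max (C₀ : ℝ) 1 with hCdef
  have hC1 : (1:ℝ) ≤ C := le_max_right _ _
  have hCpos : (0:ℝ) < C := lt_of_lt_of_le one_pos hC1
  have hLip' : ∀ x y : EuclideanSpace ℝ (Fin n), |u x - u y| ≤ C * ‖x - y‖ := by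
    intro x y
    have h := hLip.dist_le_mul x y
    rw [Real.dist_eq, dist_eq_norm] at h
    exact h.trans (mul_le_mul_of_nonneg_right (le_max_left _ _) (norm_nonneg _))
  obtain ⟨M₀, hM₀⟩ := hu.continuous.bounded_above_of_compact_support hsupp
  set M : ℝ := max M₀ 1 with hMdef
  have hM1 : (1:ℝ) ≤ M := le_max_right _ _
  have hMpos : (0:ℝ) < 2 * M := by linarith
  have hM : ∀ x, |u x| ≤ M := fun x =>
    le_trans (by simpa [Real.norm_eq_abs] using hM₀ x) (le_max_left _ _)
  set K := tsupport u with hKdef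
  have hK : IsCompact K := hsupp
  have hμK : (volume : Measure (EuclideanSpace ℝ (Fin n))) K < ⊤ := hK.measure_lt_top
  set rp : ℝ → ℝ → ℝ := fun c r => if r ≤ 0 then 0 else Real.exp (Real.log r * c) with hrpdef
  have hrp : ∀ (c r : ℝ), 0 < r → rp c r = r ^ c := by
    intro c r hr
    rw [hrpdef]
    simp only [if_neg (not_le.2 hr)]
    rw [Real.rpow_def_of_pos hr]
  have hrpm : ∀ c, Measurable (rp c) := fun c =>
    Measurable.ite measurableSet_Iic measurable_const
      ((Real.measurable_log.mul_const c).exp)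
  set g : ℝ → ℝ≥0∞ := fun r =>
    ENNReal.ofReal (ψ (min (C * rp (1-α) r) (2 * M * rp (-α) r)) / r ^ (2 * n)) with hgdef
  have hg_meas : Measurable g := by
    apply Measurable.ennreal_ofReal
    exact ((hψc.measurable.comp (((hrpm (1-α)).const_mul C).min
      ((hrpm (-α)).const_mul (2*M)))).div
      (measurable_id.pow_const (2*n)))
  have hgval : ∀ r : ℝ, 0 < r → g r =
      ENNReal.ofReal (ψ (min (C * r ^ (1 - α)) (2 * M * r ^ (-α))) / r ^ (2 * n)) := by
    intro r hr
    rw [hgdef]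
    simp only [hrp _ _ hr]
  have hargnn : ∀ (l : ℝ), 0 ≤ l → ∀ x y : EuclideanSpace ℝ (Fin n),
      0 ≤ |u x - u y| / (l * ‖x - y‖ ^ α) := fun l hl x y =>
    div_nonneg (abs_nonneg _) (mul_nonneg hl (Real.rpow_nonneg (norm_nonneg _) _))
  -- pointwise bound at l = 1
  have hbound : ∀ x y : EuclideanSpace ℝ (Fin n),
      ENNReal.ofReal (φ (|u x - u y| / (1 * ‖x - y‖ ^ α)) / ‖x - y‖ ^ (2 * n))
        ≤ K.indicator (fun _ => g ‖x - y‖) x + K.indicator (fun _ => g ‖x - y‖) y := by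
    intro x y
    by_cases hxy : x = y
    · subst hxy
      rw [sub_self, sub_self, abs_zero, norm_zero, Real.zero_rpow (ne_of_lt hα2),
        mul_zero, div_zero, hzero, zero_div]
      simp
    · have hr : 0 < ‖x - y‖ := norm_pos_iff.2 (sub_ne_zero.2 hxy)
      have hrα : 0 < ‖x - y‖ ^ α := Real.rpow_pos_of_pos hr α
      have hr2n : (0:ℝ) < ‖x - y‖ ^ (2*n) := pow_pos hr _
      by_cases hout : x ∉ K ∧ y ∉ K
      · rw [image_eq_zero_of_notMem_tsupport hout.1, image_eq_zero_of_notMem_tsupport hout.2]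
        rw [sub_self, abs_zero, zero_div, hzero, zero_div]
        simp
      · have hmain : ENNReal.ofReal
            (φ (|u x - u y| / (1 * ‖x - y‖ ^ α)) / ‖x - y‖ ^ (2 * n)) ≤ g ‖x - y‖ := by
          rw [hgval _ hr]
          apply ENNReal.ofReal_le_ofReal
          have hnum : φ (|u x - u y| / (1 * ‖x - y‖ ^ α))
              ≤ ψ (min (C * ‖x - y‖ ^ (1 - α)) (2 * M * ‖x - y‖ ^ (-α))) := by
            rw [hφψ _ (hargnn 1 zero_le_one x y)]
            apply hψmono
            rw [one_mul]
            refine le_min ?_ ?_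
            · rw [div_le_iff₀ hrα]
              calc |u x - u y| ≤ C * ‖x - y‖ := hLip' x y
                _ = C * ‖x - y‖ ^ (1 - α) * ‖x - y‖ ^ α := by
                    rw [mul_assoc, ← Real.rpow_add hr]; norm_num
            · rw [div_le_iff₀ hrα]
              calc |u x - u y| ≤ |u x| + |u y| := abs_sub _ _
                _ ≤ 2 * M := by have := hM x; have := hM y; linarith
                _ = 2 * M * ‖x - y‖ ^ (-α) * ‖x - y‖ ^ α := by
                    rw [mul_assoc, ← Real.rpow_add hr]; norm_num
          calc φ (|u x - u y| / (1 * ‖x - y‖ ^ α)) / ‖x - y‖ ^ (2 * n)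
              ≤ ψ (min (C * ‖x - y‖ ^ (1 - α)) (2 * M * ‖x - y‖ ^ (-α)))
                  / ‖x - y‖ ^ (2 * n) := by gcongr
            _ = _ := rfl
        rcases not_and_or.1 hout with hx | hy
        · rw [not_not] at hx
          calc _ ≤ K.indicator (fun _ => g ‖x - y‖) x := by
                rw [indicator_of_mem hx]; exact hmain
            _ ≤ _ := le_self_add
        · rw [not_not] at hy
          calc _ ≤ K.indicator (fun _ => g ‖x - y‖) y := by
                rw [indicator_of_mem hy]; exact hmain
            _ ≤ _ := le_add_self
  -- translation invariance
  have htransL : ∀ v : EuclideanSpace ℝ (Fin n),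
      (∫⁻ z : EuclideanSpace ℝ (Fin n), g ‖z - v‖) = ∫⁻ z : EuclideanSpace ℝ (Fin n), g ‖z‖ := by
    intro v
    have h := lintegral_add_right_eq_self (μ := (volume : Measure (EuclideanSpace ℝ (Fin n))))
      (fun z => g ‖z‖) (-v)
    simpa [sub_eq_add_neg] using h
  set I0 : ℝ≥0∞ := ∫⁻ z : EuclideanSpace ℝ (Fin n), g ‖z‖ with hI0def
  -- finiteness of the radial integral
  have hI0fin : I0 < ⊤ := by
    rw [hI0def, lintegral_norm_polar volume g hg_meas]
    refine ENNReal.mul_lt_top (measure_lt_top _ _) ?_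
    have hdim : Module.finrank ℝ (EuclideanSpace ℝ (Fin n)) - 1 = n - 1 := by
      rw [finrank_euclideanSpace_fin]
    rw [hdim]
    -- pointwise identity on Ioi 0
    have hpt : ∀ y ∈ Set.Ioi (0:ℝ),
        ENNReal.ofReal (y ^ (n - 1)) * g y
          = ENNReal.ofReal
              (ψ (min (C * y ^ (1 - α)) (2 * M * y ^ (-α))) / y ^ (n + 1)) := by
      intro y hy
      have hy0 : (0:ℝ) < y := hy
      rw [hgval _ hy0]
      rw [← ENNReal.ofReal_mul (by positivity)]
      congr 1
      have hsplit : y ^ (2*n) = y ^ (n-1) * y ^ (n+1) := by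
        rw [← pow_add]; congr 1; omega
      rw [hsplit, ← mul_div_assoc, mul_div_mul_left _ _ (by positivity : y ^ (n-1) ≠ 0)]
    rw [setLIntegral_congr_fun measurableSet_Ioi hpt]
    have hsub1 : Set.Ioi (0:ℝ) ⊆ Set.Ioo (0:ℝ) 1 ∪ Set.Ici 1 := by
      intro y hy
      rcases lt_or_ge y 1 with h | h
      · exact Or.inl ⟨hy, h⟩
      · exact Or.inr h
    refine lt_of_le_of_lt ((lintegral_mono_set hsub1).trans (lintegral_union_le _ _ _)) ?_
    have hJ1 : ∫⁻ y in Set.Ioo (0:ℝ) 1,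
        ENNReal.ofReal (ψ (min (C * y ^ (1 - α)) (2 * M * y ^ (-α))) / y ^ (n + 1))
          ≤ ENNReal.ofReal (φ C) * Lunder n α φ := by
      have hstep : ∀ y ∈ Set.Ioo (0:ℝ) 1,
          ENNReal.ofReal (ψ (min (C * y ^ (1 - α)) (2 * M * y ^ (-α))) / y ^ (n + 1))
            ≤ ENNReal.ofReal (φ C) *
                ENNReal.ofReal (ψ (y ^ (1 - α) * C) / (φ C * y ^ (n + 1))) := by
        intro y hy
        have hy0 : (0:ℝ) < y := hy.1
        rw [← ENNReal.ofReal_mul (phi_nonneg hzero hpos C hCpos.le)]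
        apply ENNReal.ofReal_le_ofReal
        have h1 : ψ (min (C * y ^ (1 - α)) (2 * M * y ^ (-α))) ≤ ψ (y ^ (1 - α) * C) := by
          exact hψmono ((min_le_left _ _).trans_eq (mul_comm _ _))
        have hphiC : φ C ≠ 0 := (hpos C hCpos).ne'
        have h2 : φ C * (ψ (y ^ (1 - α) * C) / (φ C * y ^ (n + 1)))
            = ψ (y ^ (1 - α) * C) / y ^ (n + 1) := by
          rw [← mul_div_assoc, mul_div_mul_left _ _ hphiC]
        rw [h2]
        gcongr
      calc _ ≤ ∫⁻ y in Set.Ioo (0:ℝ) 1, ENNReal.ofReal (φ C) *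
            ENNReal.ofReal (ψ (y ^ (1 - α) * C) / (φ C * y ^ (n + 1))) :=
          lintegral_mono_ae ((ae_restrict_iff' measurableSet_Ioo).2 (ae_of_all _ hstep))
        _ = ENNReal.ofReal (φ C) * ∫⁻ y in Set.Ioo (0:ℝ) 1,
            ENNReal.ofReal (ψ (y ^ (1 - α) * C) / (φ C * y ^ (n + 1))) :=
          lintegral_const_mul' _ _ ENNReal.ofReal_ne_top
        _ = ENNReal.ofReal (φ C) * ∫⁻ y in Set.Ioo (0:ℝ) 1,
            ENNReal.ofReal (φ (y ^ (1 - α) * C) / (φ C * y ^ (n + 1))) := by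
          congr 1
          refine setLIntegral_congr_fun measurableSet_Ioo ?_
          intro y hy
          beta_reduce
          rw [hφψ _ (mul_nonneg (Real.rpow_nonneg hy.1.le _) hCpos.le)]
        _ ≤ ENNReal.ofReal (φ C) * Lunder n α φ := by
          gcongr
          rw [Lunder]
          exact le_biSup
            (f := fun x : ℝ => ∫⁻ t in Set.Ioo (0:ℝ) 1,
              ENNReal.ofReal (φ (t ^ (1 - α) * x) / (φ x * t ^ (n + 1))))
            (mem_Ioi.2 hCpos)
    have hJ2 : ∫⁻ y in Set.Ici (1:ℝ),
        ENNReal.ofReal (ψ (min (C * y ^ (1 - α)) (2 * M * y ^ (-α))) / y ^ (n + 1))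
          ≤ ENNReal.ofReal (φ (2*M)) * Lover n α φ := by
      rw [setLIntegral_congr (Ioi_ae_eq_Ici (a := (1:ℝ))).symm]
      have hstep : ∀ y ∈ Set.Ioi (1:ℝ),
          ENNReal.ofReal (ψ (min (C * y ^ (1 - α)) (2 * M * y ^ (-α))) / y ^ (n + 1))
            ≤ ENNReal.ofReal (φ (2*M)) *
                ENNReal.ofReal (ψ (y ^ (-α) * (2*M)) / (φ (2*M) * y ^ (n + 1))) := by
        intro y hy
        have hy0 : (0:ℝ) < y := lt_trans one_pos hy
        rw [← ENNReal.ofReal_mul (phi_nonneg hzero hpos _ hMpos.le)]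
        apply ENNReal.ofReal_le_ofReal
        have h1 : ψ (min (C * y ^ (1 - α)) (2 * M * y ^ (-α))) ≤ ψ (y ^ (-α) * (2*M)) := by
          exact hψmono ((min_le_right _ _).trans_eq (mul_comm _ _))
        have hphiM : φ (2*M) ≠ 0 := (hpos _ hMpos).ne'
        have h2 : φ (2*M) * (ψ (y ^ (-α) * (2*M)) / (φ (2*M) * y ^ (n + 1)))
            = ψ (y ^ (-α) * (2*M)) / y ^ (n + 1) := by
          rw [← mul_div_assoc, mul_div_mul_left _ _ hphiM]
        rw [h2]
        gcongr
      calc _ ≤ ∫⁻ y in Set.Ioi (1:ℝ), ENNReal.ofReal (φ (2*M)) *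
            ENNReal.ofReal (ψ (y ^ (-α) * (2*M)) / (φ (2*M) * y ^ (n + 1))) :=
          lintegral_mono_ae ((ae_restrict_iff' measurableSet_Ioi).2 (ae_of_all _ hstep))
        _ = ENNReal.ofReal (φ (2*M)) * ∫⁻ y in Set.Ioi (1:ℝ),
            ENNReal.ofReal (ψ (y ^ (-α) * (2*M)) / (φ (2*M) * y ^ (n + 1))) :=
          lintegral_const_mul' _ _ ENNReal.ofReal_ne_top
        _ = ENNReal.ofReal (φ (2*M)) * ∫⁻ y in Set.Ioi (1:ℝ),
            ENNReal.ofReal (φ (y ^ (-α) * (2*M)) / (φ (2*M) * y ^ (n + 1))) := by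
          congr 1
          refine setLIntegral_congr_fun measurableSet_Ioi ?_
          intro y hy
          have hy0 : (0:ℝ) < y := lt_trans one_pos hy
          beta_reduce
          rw [hφψ _ (mul_nonneg (Real.rpow_nonneg hy0.le _) hMpos.le)]
        _ ≤ ENNReal.ofReal (φ (2*M)) * Lover n α φ := by
          gcongr
          rw [Lover]
          exact le_biSup
            (f := fun x : ℝ => ∫⁻ t in Set.Ioi (1:ℝ),
              ENNReal.ofReal (φ (t ^ (-α) * x) / (φ x * t ^ (n + 1))))
            (mem_Ioi.2 hMpos)
    calc _ ≤ (ENNReal.ofReal (φ C) * Lunder n α φ)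
          + ENNReal.ofReal (φ (2*M)) * Lover n α φ := add_le_add hJ1 hJ2
      _ < ⊤ := by
        apply ENNReal.add_lt_top.2
        exact ⟨ENNReal.mul_lt_top ENNReal.ofReal_lt_top hL1,
          ENNReal.mul_lt_top ENNReal.ofReal_lt_top hL2⟩
  -- measurability of the two indicator majorants on the product space
  have hgnorm_meas : Measurable fun p : EuclideanSpace ℝ (Fin n) × EuclideanSpace ℝ (Fin n) =>
      g ‖p.1 - p.2‖ :=
    hg_meas.comp ((continuous_fst.sub continuous_snd).norm.measurable)
  have hA_unc : Measurable fun p : EuclideanSpace ℝ (Fin n) × EuclideanSpace ℝ (Fin n) =>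
      K.indicator (fun _ => g ‖p.1 - p.2‖) p.1 := by
    have heq : (fun p : EuclideanSpace ℝ (Fin n) × EuclideanSpace ℝ (Fin n) =>
        K.indicator (fun _ => g ‖p.1 - p.2‖) p.1)
        = (K ×ˢ (Set.univ : Set (EuclideanSpace ℝ (Fin n)))).indicator
            (fun p => g ‖p.1 - p.2‖) := by
      funext p
      by_cases hp : p.1 ∈ K <;>
        simp [Set.indicator, hp]
    rw [heq]
    exact hgnorm_meas.indicator (hK.measurableSet.prod MeasurableSet.univ)
  have hB_unc : Measurable fun p : EuclideanSpace ℝ (Fin n) × EuclideanSpace ℝ (Fin n) =>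
      K.indicator (fun _ => g ‖p.1 - p.2‖) p.2 := by
    have heq : (fun p : EuclideanSpace ℝ (Fin n) × EuclideanSpace ℝ (Fin n) =>
        K.indicator (fun _ => g ‖p.1 - p.2‖) p.2)
        = ((Set.univ : Set (EuclideanSpace ℝ (Fin n))) ×ˢ K).indicator
            (fun p => g ‖p.1 - p.2‖) := by
      funext p
      by_cases hp : p.2 ∈ K <;>
        simp [Set.indicator, hp]
    rw [heq]
    exact hgnorm_meas.indicator (MeasurableSet.univ.prod hK.measurableSet)
  -- first term
  have hterm1 : (∫⁻ x in Ω, ∫⁻ y in Ω, K.indicator (fun _ => g ‖x - y‖) x)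
      ≤ I0 * volume K := by
    have step : ∀ x : EuclideanSpace ℝ (Fin n),
        (∫⁻ y in Ω, K.indicator (fun _ => g ‖x - y‖) x)
          ≤ K.indicator (fun _ => I0) x := by
      intro x
      by_cases hx : x ∈ K
      · simp only [indicator_of_mem hx]
        calc (∫⁻ y in Ω, g ‖x - y‖) ≤ ∫⁻ y, g ‖x - y‖ := setLIntegral_le_lintegral _ _
          _ = I0 := by
              have hrev : ∀ y : EuclideanSpace ℝ (Fin n), ‖x - y‖ = ‖y - x‖ :=
                fun y => norm_sub_rev _ _
              simp_rw [hrev]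
              exact htransL x
      · simp [indicator_of_notMem hx]
    calc _ ≤ ∫⁻ x in Ω, K.indicator (fun _ => I0) x := lintegral_mono step
      _ ≤ ∫⁻ x, K.indicator (fun _ => I0) x := setLIntegral_le_lintegral _ _
      _ = I0 * volume K := by
          rw [lintegral_indicator hK.measurableSet, setLIntegral_const]
  -- second term, via Tonelli
  have hterm2 : (∫⁻ x in Ω, ∫⁻ y in Ω, K.indicator (fun _ => g ‖x - y‖) y)
      ≤ I0 * volume K := by
    have hswap : (∫⁻ x in Ω, ∫⁻ y in Ω, K.indicator (fun _ => g ‖x - y‖) y)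
        = ∫⁻ y in Ω, ∫⁻ x in Ω, K.indicator (fun _ => g ‖x - y‖) y :=
      lintegral_lintegral_swap hB_unc.aemeasurable
    rw [hswap]
    have step : ∀ y : EuclideanSpace ℝ (Fin n),
        (∫⁻ x in Ω, K.indicator (fun _ => g ‖x - y‖) y)
          ≤ K.indicator (fun _ => I0) y := by
      intro y
      by_cases hy : y ∈ K
      · simp only [indicator_of_mem hy]
        calc (∫⁻ x in Ω, g ‖x - y‖) ≤ ∫⁻ x, g ‖x - y‖ := setLIntegral_le_lintegral _ _
          _ = I0 := htransL y
      · simp [indicator_of_notMem hy]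
    calc _ ≤ ∫⁻ y in Ω, K.indicator (fun _ => I0) y := lintegral_mono step
      _ ≤ ∫⁻ y, K.indicator (fun _ => I0) y := setLIntegral_le_lintegral _ _
      _ = I0 * volume K := by
          rw [lintegral_indicator hK.measurableSet, setLIntegral_const]
  -- finiteness of the double integral at l = 1
  set F1 : ℝ≥0∞ := ∫⁻ x in Ω, ∫⁻ y in Ω,
    ENNReal.ofReal (φ (|u x - u y| / (1 * ‖x - y‖ ^ α)) / ‖x - y‖ ^ (2 * n)) with hF1def
  have hsplit_inner : ∀ x : EuclideanSpace ℝ (Fin n),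
      (∫⁻ y in Ω, (K.indicator (fun _ => g ‖x - y‖) x + K.indicator (fun _ => g ‖x - y‖) y))
        = (∫⁻ y in Ω, K.indicator (fun _ => g ‖x - y‖) x)
          + ∫⁻ y in Ω, K.indicator (fun _ => g ‖x - y‖) y := by
    intro x
    by_cases hx : x ∈ K
    · simp only [indicator_of_mem hx]
      exact lintegral_add_left (hg_meas.comp ((continuous_const.sub continuous_id).norm.measurable)) _
    · simp only [indicator_of_notMem hx]
      simp
  have hF1fin : F1 < ⊤ := by
    have hle : F1 ≤ I0 * volume K + I0 * volume K := by
      calc F1 ≤ ∫⁻ x in Ω, ∫⁻ y in Ω,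
            (K.indicator (fun _ => g ‖x - y‖) x + K.indicator (fun _ => g ‖x - y‖) y) :=
          lintegral_mono fun x => lintegral_mono fun y => hbound x y
        _ = (∫⁻ x in Ω, ∫⁻ y in Ω, K.indicator (fun _ => g ‖x - y‖) x)
            + ∫⁻ x in Ω, ∫⁻ y in Ω, K.indicator (fun _ => g ‖x - y‖) y := by
          rw [← lintegral_add_left]
          · exact lintegral_congr hsplit_inner
          · exact Measurable.lintegral_prod_right' hA_unc
        _ ≤ I0 * volume K + I0 * volume K := add_le_add hterm1 hterm2
    exact lt_of_le_of_lt hle (ENNReal.add_lt_top.2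
      ⟨ENNReal.mul_lt_top hI0fin hμK, ENNReal.mul_lt_top hI0fin hμK⟩)
  -- choose the scaling parameter
  set l : ℝ := F1.toReal + 1 with hldef
  have hl1 : (1:ℝ) ≤ l := le_add_of_nonneg_left ENNReal.toReal_nonneg
  have hl0 : (0:ℝ) < l := lt_of_lt_of_le one_pos hl1
  refine ⟨l, hl0, ?_⟩
  have hpt : ∀ x y : EuclideanSpace ℝ (Fin n),
      ENNReal.ofReal (φ (|u x - u y| / (l * ‖x - y‖ ^ α)) / ‖x - y‖ ^ (2 * n))
        ≤ ENNReal.ofReal (1/l) *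
          ENNReal.ofReal (φ (|u x - u y| / (1 * ‖x - y‖ ^ α)) / ‖x - y‖ ^ (2 * n)) := by
    intro x y
    rw [← ENNReal.ofReal_mul (by positivity)]
    apply ENNReal.ofReal_le_ofReal
    have e1 : |u x - u y| / (l * ‖x - y‖ ^ α)
        = (|u x - u y| / (1 * ‖x - y‖ ^ α)) / l := by
      rw [one_mul, div_mul_eq_div_div_swap]
    rw [e1]
    have h2 : φ ((|u x - u y| / (1 * ‖x - y‖ ^ α)) / l)
        ≤ (1/l) * φ (|u x - u y| / (1 * ‖x - y‖ ^ α)) :=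
      phi_scale hconv hzero (hargnn 1 zero_le_one x y) hl1
    calc φ ((|u x - u y| / (1 * ‖x - y‖ ^ α)) / l) / ‖x - y‖ ^ (2 * n)
        ≤ ((1/l) * φ (|u x - u y| / (1 * ‖x - y‖ ^ α))) / ‖x - y‖ ^ (2 * n) := by
          rw [div_eq_mul_inv, div_eq_mul_inv]
          exact mul_le_mul_of_nonneg_right h2 (by positivity)
      _ = (1/l) * (φ (|u x - u y| / (1 * ‖x - y‖ ^ α)) / ‖x - y‖ ^ (2 * n)) :=
          mul_div_assoc _ _ _
  have hFl : (∫⁻ x in Ω, ∫⁻ y in Ω,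
      ENNReal.ofReal (φ (|u x - u y| / (l * ‖x - y‖ ^ α)) / ‖x - y‖ ^ (2 * n)))
        ≤ ENNReal.ofReal (1/l) * F1 := by
    calc _ ≤ ∫⁻ x in Ω, ∫⁻ y in Ω, ENNReal.ofReal (1/l) *
          ENNReal.ofReal (φ (|u x - u y| / (1 * ‖x - y‖ ^ α)) / ‖x - y‖ ^ (2 * n)) :=
        lintegral_mono fun x => lintegral_mono fun y => hpt x y
      _ = ∫⁻ x in Ω, ENNReal.ofReal (1/l) * ∫⁻ y in Ω,
          ENNReal.ofReal (φ (|u x - u y| / (1 * ‖x - y‖ ^ α)) / ‖x - y‖ ^ (2 * n)) := by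
        refine lintegral_congr fun x => ?_
        exact lintegral_const_mul' _ _ ENNReal.ofReal_ne_top
      _ = ENNReal.ofReal (1/l) * F1 := lintegral_const_mul' _ _ ENNReal.ofReal_ne_top
  refine hFl.trans ?_
  have hF1le : F1 ≤ ENNReal.ofReal l := by
    rw [← ENNReal.ofReal_toReal hF1fin.ne]
    exact ENNReal.ofReal_le_ofReal (by rw [hldef]; linarith)
  calc ENNReal.ofReal (1/l) * F1 ≤ ENNReal.ofReal (1/l) * ENNReal.ofReal l :=
      mul_le_mul_right hF1le _
    _ = ENNReal.ofReal ((1/l) * l) := (ENNReal.ofReal_mul (by positivity)).symm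
    _ = 1 := by rw [one_div_mul_cancel hl0.ne', ENNReal.ofReal_one]
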